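/- Let 0 ≤ a < 1, b > 0, and c > 0. Then there exists a constant C > 0, independent of t, such that for all t ≥ 0, ∫₀ᵗ e^{-c(t-s)} (t-s)^{-a} (1+s)^{-b} ds ≤ C (1+t)^{-b}. -/

import Mathlib

open Real MeasureTheory Set

lemma aux_g_int (a b c : ℝ) (ha0 : 0 ≤ a) (ha1 : a < 1) (hb : 0 < b) (hc : 0 < c) :
    IntegrableOn (fun x : ℝ => Real.exp (-c * x) * x ^ (-a) * (1 + x) ^ b) (Ioi 0) := by
  have h1 : IntegrableOn (fun x : ℝ => x ^ (-a) * Real.exp (-c * x)) (Ioi 0) := by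
    have := integrableOn_rpow_mul_exp_neg_mul_rpow (p := 1) (s := -a) (b := c)
      (by linarith) zero_lt_one hc
    simpa [Real.rpow_one] using this
  have h2 : IntegrableOn (fun x : ℝ => x ^ (b - a) * Real.exp (-c * x)) (Ioi 0) := by
    have := integrableOn_rpow_mul_exp_neg_mul_rpow (p := 1) (s := b - a) (b := c)
      (by linarith) zero_lt_one hc
    simpa [Real.rpow_one] using this
  have hG : IntegrableOn
      (fun x : ℝ => (2:ℝ) ^ b * (x ^ (-a) * Real.exp (-c * x) + x ^ (b - a) * Real.exp (-c * x)))
      (Ioi 0) := (h1.add h2).const_mul _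
  refine hG.integrable.mono' ?_ ?_
  · apply Measurable.aestronglyMeasurable
    fun_prop
  · filter_upwards [ae_restrict_mem measurableSet_Ioi] with x hx
    have hx0 : 0 < x := hx
    have hnn : 0 ≤ Real.exp (-c * x) * x ^ (-a) * (1 + x) ^ b := by positivity
    rw [Real.norm_of_nonneg hnn]
    have key : (1 + x) ^ b ≤ (2:ℝ) ^ b * (1 + x ^ b) := by
      rcases le_total x 1 with h | h
      · have h1 : (1 + x) ^ b ≤ (2:ℝ) ^ b :=
          Real.rpow_le_rpow (by linarith) (by linarith) hb.le
        have h2 : (0:ℝ) ≤ x ^ b := Real.rpow_nonneg hx0.le b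
        nlinarith [Real.rpow_pos_of_pos (show (0:ℝ) < 2 by norm_num) b]
      · have h1 : (1 + x) ^ b ≤ (2 * x) ^ b :=
          Real.rpow_le_rpow (by linarith) (by linarith) hb.le
        rw [Real.mul_rpow (by norm_num) hx0.le] at h1
        have h2 : (0:ℝ) ≤ (2:ℝ) ^ b := Real.rpow_nonneg (by norm_num) b
        nlinarith
    have hba : x ^ (b - a) = x ^ b * x ^ (-a) := by
      rw [← Real.rpow_add hx0]; ring_nf
    calc Real.exp (-c * x) * x ^ (-a) * (1 + x) ^ b
        ≤ Real.exp (-c * x) * x ^ (-a) * ((2:ℝ) ^ b * (1 + x ^ b)) := by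
          apply mul_le_mul_of_nonneg_left key (by positivity)
      _ = (2:ℝ) ^ b * (x ^ (-a) * Real.exp (-c * x) + x ^ (b - a) * Real.exp (-c * x)) := by
          rw [hba]; ring

theorem stmt1 (a b c : ℝ) (ha0 : 0 ≤ a) (ha1 : a < 1) (hb : 0 < b) (hc : 0 < c) :
    ∃ C > 0, ∀ t : ℝ, 0 ≤ t →
      ∫ s in (0:ℝ)..t, Real.exp (-c * (t - s)) * (t - s) ^ (-a) * (1 + s) ^ (-b)
        ≤ C * (1 + t) ^ (-b) := by
  set g : ℝ → ℝ := fun x => Real.exp (-c * x) * x ^ (-a) * (1 + x) ^ b with hg_def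
  have hg_int : IntegrableOn g (Ioi 0) := aux_g_int a b c ha0 ha1 hb hc
  have hg_nonneg : ∀ x : ℝ, 0 ≤ x → 0 ≤ g x := by
    intro x hx
    have : (0:ℝ) < 1 + x := by linarith
    simp only [hg_def]
    positivity
  set G : ℝ := ∫ x in Ioi (0:ℝ), g x with hG_def
  have hG_nonneg : 0 ≤ G := by
    apply setIntegral_nonneg measurableSet_Ioi
    intro x hx; exact hg_nonneg x (le_of_lt hx)
  refine ⟨G + 1, by linarith, ?_⟩
  intro t ht
  have hgt : IntervalIntegrable (fun s => g (t - s)) volume 0 t := by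
    have h0 : IntervalIntegrable g volume 0 t := by
      rw [intervalIntegrable_iff_integrableOn_Ioc_of_le ht]
      exact hg_int.mono_set Ioc_subset_Ioi_self
    simpa using (h0.comp_sub_left t).symm
  have hbound : IntervalIntegrable (fun s => (1 + t) ^ (-b) * g (t - s)) volume 0 t :=
    hgt.const_mul _
  -- pointwise inequality on [0, t]
  have hpt : ∀ s ∈ Icc (0:ℝ) t,
      Real.exp (-c * (t - s)) * (t - s) ^ (-a) * (1 + s) ^ (-b)
        ≤ (1 + t) ^ (-b) * g (t - s) := by
    intro s hs
    obtain ⟨hs0, hst⟩ := hs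
    have h1s : (0:ℝ) < 1 + s := by linarith
    have h1t : (0:ℝ) < 1 + t := by linarith
    have h1ts : (0:ℝ) < 1 + (t - s) := by linarith
    have key : (1 + t) ^ b ≤ (1 + s) ^ b * (1 + (t - s)) ^ b := by
      rw [← Real.mul_rpow h1s.le h1ts.le]
      apply Real.rpow_le_rpow h1t.le _ hb.le
      nlinarith
    have h2 : (1 + s) ^ (-b) ≤ (1 + t) ^ (-b) * (1 + (t - s)) ^ b := by
      rw [Real.rpow_neg h1s.le, Real.rpow_neg h1t.le]
      rw [inv_le_iff_one_le_mul₀' (Real.rpow_pos_of_pos h1s b)]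
      have hpt' : (0:ℝ) < (1 + t) ^ b := Real.rpow_pos_of_pos h1t b
      calc (1:ℝ) = ((1 + t) ^ b)⁻¹ * (1 + t) ^ b := by
            field_simp
        _ ≤ ((1 + t) ^ b)⁻¹ * ((1 + s) ^ b * (1 + (t - s)) ^ b) := by
            apply mul_le_mul_of_nonneg_left key (by positivity)
        _ = (1 + s) ^ b * (((1 + t) ^ b)⁻¹ * (1 + (t - s)) ^ b) := by ring
    have hnn : (0:ℝ) ≤ Real.exp (-c * (t - s)) * (t - s) ^ (-a) := by
      have : (0:ℝ) ≤ t - s := by linarith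
      positivity
    calc Real.exp (-c * (t - s)) * (t - s) ^ (-a) * (1 + s) ^ (-b)
        ≤ Real.exp (-c * (t - s)) * (t - s) ^ (-a) * ((1 + t) ^ (-b) * (1 + (t - s)) ^ b) :=
          mul_le_mul_of_nonneg_left h2 hnn
      _ = (1 + t) ^ (-b) * g (t - s) := by simp only [hg_def]; ring
  -- integrability of the LHS
  have hf : IntervalIntegrable
      (fun s => Real.exp (-c * (t - s)) * (t - s) ^ (-a) * (1 + s) ^ (-b)) volume 0 t := by
    rw [intervalIntegrable_iff_integrableOn_Ioc_of_le ht]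
    have hbd : IntegrableOn (fun s => (1 + t) ^ (-b) * g (t - s)) (Ioc 0 t) := by
      have := hbound
      rwa [intervalIntegrable_iff_integrableOn_Ioc_of_le ht] at this
    refine hbd.integrable.mono' ?_ ?_
    · apply Measurable.aestronglyMeasurable
      fun_prop
    · filter_upwards [ae_restrict_mem measurableSet_Ioc] with s hs
      have hs' : s ∈ Icc (0:ℝ) t := ⟨hs.1.le, hs.2⟩
      have hnn : 0 ≤ Real.exp (-c * (t - s)) * (t - s) ^ (-a) * (1 + s) ^ (-b) := by
        have h1 : (0:ℝ) ≤ t - s := by linarith [hs.2]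
        have h2 : (0:ℝ) < 1 + s := by linarith [hs.1.le]
        positivity
      rw [Real.norm_of_nonneg hnn]
      exact hpt s hs'
  calc ∫ s in (0:ℝ)..t, Real.exp (-c * (t - s)) * (t - s) ^ (-a) * (1 + s) ^ (-b)
      ≤ ∫ s in (0:ℝ)..t, (1 + t) ^ (-b) * g (t - s) :=
        intervalIntegral.integral_mono_on ht hf hbound hpt
    _ = (1 + t) ^ (-b) * ∫ s in (0:ℝ)..t, g (t - s) := by
        rw [intervalIntegral.integral_const_mul]
    _ = (1 + t) ^ (-b) * ∫ u in (0:ℝ)..t, g u := by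
        rw [intervalIntegral.integral_comp_sub_left g t]
        norm_num
    _ ≤ (1 + t) ^ (-b) * G := by
        apply mul_le_mul_of_nonneg_left _ (Real.rpow_nonneg (by linarith) _)
        rw [intervalIntegral.integral_of_le ht]
        apply setIntegral_mono_set hg_int
        · filter_upwards [ae_restrict_mem measurableSet_Ioi] with x hx
          exact hg_nonneg x (le_of_lt hx)
        · exact HasSubset.Subset.eventuallyLE Ioc_subset_Ioi_self
    _ ≤ (G + 1) * (1 + t) ^ (-b) := by
        have : (0:ℝ) ≤ (1 + t) ^ (-b) := Real.rpow_nonneg (by linarith) _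
        nlinarith
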